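/- arXiv:2510.27643 — 4 statements merged into one kernel-verified Lean document; each statement's English description precedes it below -/
import Mathlib

section
/- Let c > 0, L > 1/c, and A, B ∈ ℝ, and define f : ℝ → ℝ by f(z) = A·sin(c z) + B·cos(c z). If ∫₀^L f(z)² dz ≤ 1, then for every z ∈ [0, L] one has f(z)² ≤ (L/2 − 1/(2c))⁻¹. -/
/-- If `f(z) = A·sin(c z) + B·cos(c z)` with `c > 0`, `L > 1/c`, and
`∫₀^L f(z)² dz ≤ 1`, then for every `z ∈ [0, L]`, `f(z)² ≤ (L/2 − 1/(2c))⁻¹`. -/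
theorem sinusoid_sup_bound (c L A B : ℝ) (hc : 0 < c) (hL : 1 / c < L)
    (f : ℝ → ℝ) (hf : ∀ z, f z = A * Real.sin (c * z) + B * Real.cos (c * z))
    (hint : (∫ z in (0 : ℝ)..L, f z ^ 2) ≤ 1) :
    ∀ z ∈ Set.Icc (0 : ℝ) L, f z ^ 2 ≤ (L / 2 - 1 / (2 * c))⁻¹ := by
  intro z hz
  have hc' : c ≠ 0 := ne_of_gt hc
  have hpos : 0 < L / 2 - 1 / (2 * c) := by
    rw [sub_pos]
    rw [div_lt_iff₀ hc] at hL
    rw [div_lt_div_iff₀ (by positivity) (by norm_num)]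
    nlinarith
  -- antiderivative of f^2
  set F : ℝ → ℝ := fun z => (A^2+B^2)*z/2 + (B^2-A^2)*Real.sin (2*c*z)/(4*c)
      - A*B*Real.cos (2*c*z)/(2*c) with hF
  have hderiv : ∀ x : ℝ, HasDerivAt F (f x ^ 2) x := by
    intro x
    have h1 : HasDerivAt (fun y : ℝ => 2*c*y) (2*c) x := by
      simpa using (hasDerivAt_id x).const_mul (2*c)
    have hs : HasDerivAt (fun y : ℝ => Real.sin (2*c*y)) (Real.cos (2*c*x) * (2*c)) x :=
      (Real.hasDerivAt_sin (2*c*x)).comp x h1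
    have hco : HasDerivAt (fun y : ℝ => Real.cos (2*c*y)) (-Real.sin (2*c*x) * (2*c)) x :=
      (Real.hasDerivAt_cos (2*c*x)).comp x h1
    have hid : HasDerivAt (fun y : ℝ => (A^2+B^2)*y/2) ((A^2+B^2)/2) x := by
      simpa using ((hasDerivAt_id x).const_mul (A^2+B^2)).div_const 2
    have hs' : HasDerivAt (fun y : ℝ => (B^2-A^2)*Real.sin (2*c*y)/(4*c))
        ((B^2-A^2)*(Real.cos (2*c*x) * (2*c))/(4*c)) x := (hs.const_mul _).div_const _
    have hco' : HasDerivAt (fun y : ℝ => A*B*Real.cos (2*c*y)/(2*c))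
        (A*B*(-Real.sin (2*c*x) * (2*c))/(2*c)) x := (hco.const_mul _).div_const _
    have H := (hid.add hs').sub hco'
    rw [hF]
    refine H.congr_deriv (Eq.symm ?_)
    rw [hf x]
    have hsc := Real.sin_sq_add_cos_sq (c*x)
    have h2c : Real.cos (2*c*x) = Real.cos (c*x)^2 - Real.sin (c*x)^2 := by
      rw [show (2:ℝ)*c*x = 2*(c*x) by ring, Real.cos_two_mul']
    have h2s : Real.sin (2*c*x) = 2 * Real.sin (c*x) * Real.cos (c*x) := by
      rw [show (2:ℝ)*c*x = 2*(c*x) by ring, Real.sin_two_mul]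
    rw [h2c, h2s]
    field_simp
    linear_combination 4*(A^2+B^2) * hsc
  have hcont : Continuous fun z => f z ^ 2 := by
    have h0 : Continuous fun z => A * Real.sin (c * z) + B * Real.cos (c * z) := by
      fun_prop
    have : Continuous f := by simpa [funext hf] using h0
    exact this.pow 2
  have hcalc : (∫ z in (0:ℝ)..L, f z ^ 2) = F L - F 0 :=
    intervalIntegral.integral_eq_sub_of_hasDerivAt (fun x _ => hderiv x)
      (hcont.intervalIntegrable 0 L)
  have h2cpos : (0:ℝ) < 2*c := by positivity
  -- lower bound the integral
  have hlow : (A^2+B^2) * (L/2 - 1/(2*c)) ≤ F L - F 0 := by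
    have hs := Real.sin_sq_add_cos_sq (2*c*L)
    set s := Real.sin (2*c*L)
    set t := Real.cos (2*c*L)
    have key : -(A^2+B^2) ≤ (B^2-A^2)/2 * s - A*B*t + A*B := by
      have hr : (0:ℝ) ≤ A^2+B^2 := by positivity
      have h1 : ((B^2-A^2)*s - 2*A*B*t)^2 ≤ (A^2+B^2)^2 := by
        nlinarith [sq_nonneg ((B^2-A^2)*t + 2*A*B*s), hs]
      have h2 : -(A^2+B^2) ≤ (B^2-A^2)*s - 2*A*B*t := by
        nlinarith [h1, hr]
      nlinarith [h2, sq_nonneg (A+B)]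
    have eFL : F L - F 0 = (A^2+B^2)*L/2 +
        ((B^2-A^2)/2 * s - A*B*t + A*B)/(2*c) := by
      simp only [hF, mul_zero, Real.sin_zero, Real.cos_zero, zero_div]
      simp only [s, t]
      field_simp
      ring
    have h3 : (-(A^2+B^2))/(2*c) ≤
        ((B^2-A^2)/2 * s - A*B*t + A*B)/(2*c) := by gcongr
    have e : (A^2+B^2)*(L/2 - 1/(2*c)) = (A^2+B^2)*L/2 + (-(A^2+B^2))/(2*c) := by
      field_simp; ring
    rw [eFL, e]
    linarith
  -- pointwise bound f z ^ 2 ≤ A^2 + B^2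
  have hpt : f z ^ 2 ≤ A^2 + B^2 := by
    rw [hf z]
    nlinarith [Real.sin_sq_add_cos_sq (c*z),
      sq_nonneg (A * Real.cos (c*z) - B * Real.sin (c*z))]
  -- conclude
  have chain : f z ^ 2 * (L/2 - 1/(2*c)) ≤ 1 := by
    calc f z ^ 2 * (L/2 - 1/(2*c)) ≤ (A^2+B^2) * (L/2 - 1/(2*c)) :=
          mul_le_mul_of_nonneg_right hpt hpos.le
      _ ≤ F L - F 0 := hlow
      _ = ∫ z in (0:ℝ)..L, f z ^ 2 := hcalc.symm
      _ ≤ 1 := hint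
  rw [← one_div]
  exact (le_div_iff₀ hpos).mpr chain
end

section
/- Let c > 0, L > 1/c, and A, B ∈ ℝ, and define f : ℝ → ℝ by f(z) = A·sin(c z) + B·cos(c z). If ∫₀^L f(z)² dz ≤ 1, then for every z ∈ ℝ one has (f′(z))² ≤ c²·(L/2 − 1/(2c))⁻¹, where f′ denotes the derivative of f. -/
set_option maxHeartbeats 1000000 in
/-- If `f(z) = A·sin(c z) + B·cos(c z)` with `c > 0`, `L > 1/c`, and
`∫₀^L f(z)² dz ≤ 1`, then for every `z ∈ ℝ`,
`(f′(z))² ≤ c²·(L/2 − 1/(2c))⁻¹`. -/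
theorem sinusoid_deriv_sup_bound (c L A B : ℝ) (hc : 0 < c) (hL : 1 / c < L)
    (f : ℝ → ℝ) (hf : ∀ z, f z = A * Real.sin (c * z) + B * Real.cos (c * z))
    (hint : (∫ z in (0 : ℝ)..L, f z ^ 2) ≤ 1) :
    ∀ z : ℝ, deriv f z ^ 2 ≤ c ^ 2 * (L / 2 - 1 / (2 * c))⁻¹ := by
  have hfe : f = fun z => A * Real.sin (c * z) + B * Real.cos (c * z) := funext hf
  subst hfe
  have hpos : 0 < L / 2 - 1 / (2 * c) := by
    have h2 : 1 / (2 * c) = (1 / c) / 2 := by ring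
    rw [h2]; linarith
  -- antiderivative of f^2
  set G : ℝ → ℝ := fun z => (A ^ 2 + B ^ 2) / 2 * z
      + (B ^ 2 - A ^ 2) / (4 * c) * Real.sin (2 * (c * z))
      - A * B / (2 * c) * Real.cos (2 * (c * z)) with hG
  have hderG : ∀ x ∈ Set.uIcc (0 : ℝ) L, HasDerivAt G
      ((fun z => A * Real.sin (c * z) + B * Real.cos (c * z)) x ^ 2) x := by
    intro x _
    have h2cz : HasDerivAt (fun z : ℝ => 2 * (c * z)) (2 * c) x := by
      simpa [mul_assoc] using (hasDerivAt_id x).const_mul (2 * c)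
    have hG' : HasDerivAt G ((A ^ 2 + B ^ 2) / 2 * 1
        + (B ^ 2 - A ^ 2) / (4 * c) * (Real.cos (2 * (c * x)) * (2 * c))
        - A * B / (2 * c) * (-Real.sin (2 * (c * x)) * (2 * c))) x :=
      (((hasDerivAt_id x).const_mul ((A ^ 2 + B ^ 2) / 2)).add
        (((Real.hasDerivAt_sin _).comp x h2cz).const_mul _)).sub
        (((Real.hasDerivAt_cos _).comp x h2cz).const_mul _)
    convert hG' using 1
    have hs := Real.sin_two_mul (c * x)
    have hc2 := Real.cos_two_mul (c * x)
    have hpy := Real.sin_sq_add_cos_sq (c * x)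
    rw [hs, hc2]
    field_simp
    linear_combination (8 * A ^ 2) * hpy
  have hInt : (∫ z in (0 : ℝ)..L,
      (A * Real.sin (c * z) + B * Real.cos (c * z)) ^ 2) = G L - G 0 := by
    apply intervalIntegral.integral_eq_sub_of_hasDerivAt hderG
    apply Continuous.intervalIntegrable
    fun_prop
  set s := Real.sin (2 * (c * L)) with hsdef
  set cc := Real.cos (2 * (c * L)) with hccdef
  have hpy : s ^ 2 + cc ^ 2 = 1 := Real.sin_sq_add_cos_sq _
  have h1 : ((B ^ 2 - A ^ 2) * s - 2 * A * B * cc) ^ 2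
      + ((B ^ 2 - A ^ 2) * cc + 2 * A * B * s) ^ 2 = (A ^ 2 + B ^ 2) ^ 2 := by
    linear_combination ((A ^ 2 + B ^ 2) ^ 2) * hpy
  have hT : 0 ≤ (B ^ 2 - A ^ 2) * s - 2 * A * B * cc + 2 * A * B
      + 2 * (A ^ 2 + B ^ 2) := by
    nlinarith [h1, sq_nonneg ((B ^ 2 - A ^ 2) * cc + 2 * A * B * s), sq_nonneg (A + B),
      sq_nonneg ((B ^ 2 - A ^ 2) * s - 2 * A * B * cc + (A ^ 2 + B ^ 2)),
      mul_nonneg (add_nonneg (sq_nonneg A) (sq_nonneg B)) (sq_nonneg (A + B))]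
  have hdiff : G L - G 0 - (A ^ 2 + B ^ 2) * (L / 2 - 1 / (2 * c))
      = ((B ^ 2 - A ^ 2) * s - 2 * A * B * cc + 2 * A * B
        + 2 * (A ^ 2 + B ^ 2)) / (4 * c) := by
    simp only [hG, mul_zero, Real.sin_zero, Real.cos_zero]
    field_simp
    rw [hsdef, hccdef]
    ring_nf
  have h4c : (0 : ℝ) < 4 * c := by linarith
  have key : (A ^ 2 + B ^ 2) * (L / 2 - 1 / (2 * c)) ≤ G L - G 0 := by
    have := div_nonneg hT h4c.le
    linarith [hdiff]
  rw [hInt] at hint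
  have hAB : A ^ 2 + B ^ 2 ≤ (L / 2 - 1 / (2 * c))⁻¹ := by
    rw [inv_eq_one_div, le_div_iff₀ hpos]
    exact key.trans hint
  intro z
  have hcz : HasDerivAt (fun z : ℝ => c * z) c z := by
    simpa using (hasDerivAt_id z).const_mul c
  have hd : HasDerivAt (fun z => A * Real.sin (c * z) + B * Real.cos (c * z))
      (A * (Real.cos (c * z) * c) + B * (-Real.sin (c * z) * c)) z :=
    (((Real.hasDerivAt_sin (c * z)).comp z hcz).const_mul A).add
      (((Real.hasDerivAt_cos (c * z)).comp z hcz).const_mul B)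
  rw [hd.deriv]
  have hpy2 := Real.sin_sq_add_cos_sq (c * z)
  nlinarith [sq_nonneg (A * Real.sin (c * z) + B * Real.cos (c * z)),
    mul_le_mul_of_nonneg_left hAB (sq_nonneg c), sq_nonneg c, hpy2,
    mul_pos hc hc]
end

section
/- Let U be an invertible n×n real matrix, set C := U^{−1}·(Uᵀ)^{−1}, let G be an n×n real matrix and κ ∈ ℝ, and suppose κ²·C + G is invertible. Define Λ := U·(κ²·C + G)·Uᵀ. Then for every natural number m, the matrix C·(κ²·I + C^{−1}·G)^m is invertible and Uᵀ·Λ^{−m}·U = (C·(κ²·I + C^{−1}·G)^m)^{−1}. -/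
open Matrix

/-- FEM precision-matrix identity (half-integer smoothness): with `U`
invertible, `C := U⁻¹·(Uᵀ)⁻¹`, `κ²C + G` invertible, and
`Λ := U·(κ²C + G)·Uᵀ`, for every `m : ℕ` the matrix
`Q := C·(κ²I + C⁻¹G)^m` is invertible and `Uᵀ·Λ^{−m}·U = Q⁻¹`. -/
theorem fem_precision_matrix_identity {n : ℕ}
    (U G C Λ : Matrix (Fin n) (Fin n) ℝ) (hU : IsUnit U) (κ : ℝ)
    (hC : C = U⁻¹ * (Uᵀ)⁻¹)
    (hM : IsUnit (κ ^ 2 • C + G))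
    (hΛ : Λ = U * (κ ^ 2 • C + G) * Uᵀ) :
    ∀ m : ℕ,
      IsUnit (C * (κ ^ 2 • (1 : Matrix (Fin n) (Fin n) ℝ) + C⁻¹ * G) ^ m) ∧
      Uᵀ * (Λ ^ m)⁻¹ * U =
        (C * (κ ^ 2 • (1 : Matrix (Fin n) (Fin n) ℝ) + C⁻¹ * G) ^ m)⁻¹ := by
  intro m
  set M : Matrix (Fin n) (Fin n) ℝ := κ ^ 2 • C + G with hMdef
  -- units / determinants
  have hUd : IsUnit U.det := (isUnit_iff_isUnit_det U).mp hU
  have hUt : IsUnit Uᵀ := (isUnit_iff_isUnit_det Uᵀ).mpr (by simpa using hUd)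
  have hUtd : IsUnit Uᵀ.det := (isUnit_iff_isUnit_det Uᵀ).mp hUt
  have hCunit : IsUnit C := by
    rw [hC]
    exact (Matrix.isUnit_nonsing_inv_iff.mpr hU).mul (Matrix.isUnit_nonsing_inv_iff.mpr hUt)
  have hCd : IsUnit C.det := (isUnit_iff_isUnit_det C).mp hCunit
  have hMd : IsUnit M.det := (isUnit_iff_isUnit_det M).mp hM
  -- C⁻¹ = Uᵀ * U
  set A : Matrix (Fin n) (Fin n) ℝ := Uᵀ * U with hAdef
  have hCinv : C⁻¹ = A := by
    rw [hC, Matrix.mul_inv_rev, Matrix.nonsing_inv_nonsing_inv U hUd,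
      Matrix.nonsing_inv_nonsing_inv Uᵀ hUtd]
  have hAunit : IsUnit A := hUt.mul hU
  -- the bracket equals C⁻¹ * M
  have hE : κ ^ 2 • (1 : Matrix (Fin n) (Fin n) ℝ) + C⁻¹ * G = C⁻¹ * M := by
    rw [hMdef, Matrix.mul_add, Matrix.mul_smul, Matrix.nonsing_inv_mul C hCd]
  have hAMunit : IsUnit ((A * M) ^ m) := ((hAunit.mul hM).pow m)
  have hMAunit : IsUnit ((M * A) ^ m) := ((hM.mul hAunit).pow m)
  have hQunit : IsUnit (C * (κ ^ 2 • (1 : Matrix (Fin n) (Fin n) ℝ) + C⁻¹ * G) ^ m) := by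
    rw [hE, hCinv]
    exact hCunit.mul hAMunit
  refine ⟨hQunit, ?_⟩
  -- Λ = U * (M * A) * U⁻¹
  have hΛ' : Λ = U * (M * A) * U⁻¹ := by
    rw [hΛ, hAdef]
    have : Uᵀ = Uᵀ * U * U⁻¹ := by
      rw [Matrix.mul_assoc, Matrix.mul_nonsing_inv U hUd, Matrix.mul_one]
    calc U * M * Uᵀ = U * M * (Uᵀ * U * U⁻¹) := by rw [← this]
      _ = U * (M * (Uᵀ * U)) * U⁻¹ := by noncomm_ring
  -- Λ^m = U * (M*A)^m * U⁻¹
  have hΛpow : Λ ^ m = U * (M * A) ^ m * U⁻¹ := by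
    rw [hΛ']
    have := hU.unit.conj_pow (M * A) m
    simpa [hU.unit_spec, Matrix.coe_units_inv] using this
  have hinv : (Λ ^ m)⁻¹ = U * ((M * A) ^ m)⁻¹ * U⁻¹ := by
    rw [hΛpow, Matrix.mul_inv_rev, Matrix.mul_inv_rev,
      Matrix.nonsing_inv_nonsing_inv U hUd, Matrix.mul_assoc]
  -- LHS = A * ((M*A)^m)⁻¹
  have hLHS : Uᵀ * (Λ ^ m)⁻¹ * U = A * ((M * A) ^ m)⁻¹ := by
    rw [hinv]
    calc Uᵀ * (U * ((M * A) ^ m)⁻¹ * U⁻¹) * U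
        = (Uᵀ * U) * ((M * A) ^ m)⁻¹ * (U⁻¹ * U) := by noncomm_ring
      _ = A * ((M * A) ^ m)⁻¹ := by
          rw [Matrix.nonsing_inv_mul U hUd, Matrix.mul_one, hAdef]
  -- RHS = ((A*M)^m)⁻¹ * A
  have hRHS : (C * (κ ^ 2 • (1 : Matrix (Fin n) (Fin n) ℝ) + C⁻¹ * G) ^ m)⁻¹
      = ((A * M) ^ m)⁻¹ * A := by
    rw [hE, Matrix.mul_inv_rev, hCinv]
  rw [hLHS, hRHS]
  -- semiconjugation: A * (M*A)^m = (A*M)^m * A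
  have hsemi : A * (M * A) ^ m = (A * M) ^ m * A := by
    have h : SemiconjBy A (M * A) (A * M) := by
      unfold SemiconjBy
      noncomm_ring
    simpa using (h.pow_right m).eq
  have hAMd : IsUnit ((A * M) ^ m).det := (isUnit_iff_isUnit_det _).mp hAMunit
  have hMAd : IsUnit ((M * A) ^ m).det := (isUnit_iff_isUnit_det _).mp hMAunit
  have h1 : (A * M) ^ m * (A * ((M * A) ^ m)⁻¹) = A := by
    rw [← Matrix.mul_assoc, ← hsemi, Matrix.mul_assoc,
      Matrix.mul_nonsing_inv _ hMAd, Matrix.mul_one]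
  calc A * ((M * A) ^ m)⁻¹
      = ((A * M) ^ m)⁻¹ * ((A * M) ^ m * (A * ((M * A) ^ m)⁻¹)) := by
        rw [← Matrix.mul_assoc, ← Matrix.mul_assoc,
          Matrix.nonsing_inv_mul _ hAMd, Matrix.one_mul]
    _ = ((A * M) ^ m)⁻¹ * A := by rw [h1]
end

section
/- Let U be an invertible n×n real matrix, set C := U^{−1}·(Uᵀ)^{−1}, let G be a symmetric n×n real matrix and κ ∈ ℝ, and define Λ := U·(κ²·C + G)·Uᵀ. Let p_ℓ and p_r be polynomials with real coefficients, and set P_ℓ := p_ℓ(κ²·I + C^{−1}·G) and P_r := p_r(κ²·I + C^{−1}·G). If P_ℓ is invertible, then p_ℓ(Λ) is invertible and Uᵀ·p_r(Λ)·(p_ℓ(Λ))^{−2}·p_r(Λ)·U = P_r·(P_ℓᵀ·C·P_ℓ)^{−1}·P_rᵀ. -/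
open Matrix Polynomial

private lemma aeval_conj_mat {n : ℕ} (U M : Matrix (Fin n) (Fin n) ℝ) (hU : IsUnit U)
    (p : Polynomial ℝ) : aeval (U * M * U⁻¹) p = U * aeval M p * U⁻¹ := by
  have hd : IsUnit U.det := (Matrix.isUnit_iff_isUnit_det U).mp hU
  have h1 : U⁻¹ * U = 1 := Matrix.nonsing_inv_mul U hd
  have h2 : U * U⁻¹ = 1 := Matrix.mul_nonsing_inv U hd
  have hpow : ∀ k : ℕ, (U * M * U⁻¹) ^ k = U * M ^ k * U⁻¹ := by
    intro k
    induction k with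
    | zero => simp [h2]
    | succ k ih =>
        rw [pow_succ, ih, pow_succ]
        have : U * M ^ k * U⁻¹ * (U * M * U⁻¹) = U * M ^ k * (U⁻¹ * U) * M * U⁻¹ := by
          noncomm_ring
        rw [this, h1, mul_one]
        noncomm_ring
  induction p using Polynomial.induction_on' with
  | add p q hp hq => simp [map_add, hp, hq, Matrix.mul_add, Matrix.add_mul]
  | monomial k a =>
      simp only [aeval_monomial, hpow, Algebra.algebraMap_eq_smul_one, smul_mul_assoc,
        one_mul, mul_smul_comm]

private lemma aeval_transpose_mat {n : ℕ} (M : Matrix (Fin n) (Fin n) ℝ)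
    (p : Polynomial ℝ) : (aeval M p)ᵀ = aeval Mᵀ p := by
  induction p using Polynomial.induction_on' with
  | add p q hp hq => simp [map_add, hp, hq, Matrix.transpose_add]
  | monomial k a =>
      simp only [aeval_monomial, Algebra.algebraMap_eq_smul_one, smul_mul_assoc, one_mul,
        Matrix.transpose_smul, Matrix.transpose_pow]

/-- Core identity of the rational FEM kernel (Lemma 3.3): with `U`
invertible, `C := U⁻¹·(Uᵀ)⁻¹`, `G` symmetric, `Λ := U·(κ²C + G)·Uᵀ`,
`P_ℓ := p_ℓ(κ²I + C⁻¹G)` and `P_r := p_r(κ²I + C⁻¹G)`, if `P_ℓ` is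
invertible then `p_ℓ(Λ)` is invertible and
`Uᵀ·p_r(Λ)·(p_ℓ(Λ))⁻²·p_r(Λ)·U = P_r·(P_ℓᵀ·C·P_ℓ)⁻¹·P_rᵀ`. -/
theorem rational_fem_kernel_identity {n : ℕ}
    (U G C Λ Pl Pr : Matrix (Fin n) (Fin n) ℝ) (hU : IsUnit U) (κ : ℝ)
    (hC : C = U⁻¹ * (Uᵀ)⁻¹) (hGsymm : G.IsSymm)
    (hΛ : Λ = U * (κ ^ 2 • C + G) * Uᵀ)
    (pl pr : Polynomial ℝ)
    (hPl : Pl = aeval (κ ^ 2 • (1 : Matrix (Fin n) (Fin n) ℝ) + C⁻¹ * G) pl)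
    (hPr : Pr = aeval (κ ^ 2 • (1 : Matrix (Fin n) (Fin n) ℝ) + C⁻¹ * G) pr)
    (hPl_unit : IsUnit Pl) :
    IsUnit (aeval Λ pl) ∧
    Uᵀ * aeval Λ pr * ((aeval Λ pl) ^ 2)⁻¹ * aeval Λ pr * U =
      Pr * (Plᵀ * C * Pl)⁻¹ * Prᵀ := by
  have hd : IsUnit U.det := (Matrix.isUnit_iff_isUnit_det U).mp hU
  have hdT : IsUnit Uᵀ.det := by simpa [Matrix.det_transpose] using hd
  have hUT : IsUnit Uᵀ := (Matrix.isUnit_iff_isUnit_det Uᵀ).mpr hdT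
  have hT1 : Uᵀ * (Uᵀ)⁻¹ = 1 := Matrix.mul_nonsing_inv Uᵀ hdT
  have hT2 : (Uᵀ)⁻¹ * Uᵀ = 1 := Matrix.nonsing_inv_mul Uᵀ hdT
  have h1 : U * U⁻¹ = 1 := Matrix.mul_nonsing_inv U hd
  have h2 : U⁻¹ * U = 1 := Matrix.nonsing_inv_mul U hd
  have hCinv : C⁻¹ = Uᵀ * U := by
    rw [hC, Matrix.mul_inv_rev, Matrix.nonsing_inv_nonsing_inv U hd,
      Matrix.nonsing_inv_nonsing_inv Uᵀ hdT]
  have hA : κ ^ 2 • (1 : Matrix (Fin n) (Fin n) ℝ) + C⁻¹ * G = Uᵀ * Λ * (Uᵀ)⁻¹ := by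
    have key : Uᵀ * Λ * (Uᵀ)⁻¹ = Uᵀ * U * (κ ^ 2 • C + G) := by
      rw [hΛ, Matrix.mul_assoc Uᵀ, Matrix.mul_assoc (U * (κ ^ 2 • C + G)), hT1,
        Matrix.mul_one, ← Matrix.mul_assoc]
    have hone : Uᵀ * U * C = 1 := by
      rw [hC, ← Matrix.mul_assoc, Matrix.mul_assoc Uᵀ U, h1, Matrix.mul_one, hT1]
    rw [key, Matrix.mul_add, Matrix.mul_smul, hone, hCinv]
  have hPl' : Pl = Uᵀ * aeval Λ pl * (Uᵀ)⁻¹ := by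
    rw [hPl, hA, aeval_conj_mat _ _ hUT]
  have hPr' : Pr = Uᵀ * aeval Λ pr * (Uᵀ)⁻¹ := by
    rw [hPr, hA, aeval_conj_mat _ _ hUT]
  have hLunit : IsUnit (aeval Λ pl) := by
    have hdet : Pl.det = (aeval Λ pl).det := by
      rw [hPl', Matrix.det_mul, Matrix.det_mul, Matrix.det_nonsing_inv, mul_comm Uᵀ.det,
        mul_assoc, Ring.mul_inverse_cancel _ hdT, mul_one]
    have := (Matrix.isUnit_iff_isUnit_det Pl).mp hPl_unit
    rw [hdet] at this
    exact (Matrix.isUnit_iff_isUnit_det _).mpr this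
  refine ⟨hLunit, ?_⟩
  have hCsymm : Cᵀ = C := by
    rw [hC, Matrix.transpose_mul, Matrix.transpose_nonsing_inv, Matrix.transpose_nonsing_inv,
      Matrix.transpose_transpose]
  have hΛsymm : Λᵀ = Λ := by
    rw [hΛ]
    simp [Matrix.transpose_mul, Matrix.transpose_add, Matrix.transpose_smul, hCsymm,
      hGsymm.eq, Matrix.mul_assoc]
  set L := aeval Λ pl with hL
  set R := aeval Λ pr with hR
  have hLsymm : Lᵀ = L := by rw [hL, aeval_transpose_mat, hΛsymm]
  have hRsymm : Rᵀ = R := by rw [hR, aeval_transpose_mat, hΛsymm]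
  have hPlT : Plᵀ = U⁻¹ * L * U := by
    rw [hPl', Matrix.transpose_mul, Matrix.transpose_mul, Matrix.transpose_nonsing_inv,
      Matrix.transpose_transpose, hLsymm]
    noncomm_ring
  have hPrT : Prᵀ = U⁻¹ * R * U := by
    rw [hPr', Matrix.transpose_mul, Matrix.transpose_mul, Matrix.transpose_nonsing_inv,
      Matrix.transpose_transpose, hRsymm]
    noncomm_ring
  have hmid : Plᵀ * C * Pl = U⁻¹ * L ^ 2 * (Uᵀ)⁻¹ := by
    rw [hPlT, hC, hPl']
    have : U⁻¹ * L * U * (U⁻¹ * (Uᵀ)⁻¹) * (Uᵀ * L * (Uᵀ)⁻¹)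
        = U⁻¹ * L * (U * U⁻¹) * ((Uᵀ)⁻¹ * Uᵀ) * L * (Uᵀ)⁻¹ := by noncomm_ring
    rw [this, h1, hT2, mul_one, mul_one, sq]
    noncomm_ring
  have hinv : (Plᵀ * C * Pl)⁻¹ = Uᵀ * (L ^ 2)⁻¹ * U := by
    rw [hmid, Matrix.mul_inv_rev, Matrix.mul_inv_rev,
      Matrix.nonsing_inv_nonsing_inv U hd, Matrix.nonsing_inv_nonsing_inv Uᵀ hdT]
    noncomm_ring
  rw [hinv, hPrT, hPr']
  have : Uᵀ * R * (Uᵀ)⁻¹ * (Uᵀ * (L ^ 2)⁻¹ * U) * (U⁻¹ * R * U)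
      = Uᵀ * R * ((Uᵀ)⁻¹ * Uᵀ) * (L ^ 2)⁻¹ * (U * U⁻¹) * R * U := by noncomm_ring
  rw [this, hT2, h1, mul_one, mul_one]
end
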